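/- For every links system L and every j ∈ {1,…,k−1}: the cut δ_L(Q_j) contains no link of P_k; for each i ∈ {1,…,k−1}, δ_L(Q_j) contains exactly two links of P_i if P_i has an internal node in Q_j and contains no link of P_i otherwise; consequently |δ_L(Q_j)| = k. -/
import Mathlib


open Finset

namespace CoverSmallCuts

/-- `nn k` is the number `n = 2 + k(k-1)/2` of nodes. -/
def nn (k : ℕ) : ℕ := 2 + k * (k - 1) / 2

/-- `mm k` is the number `m = k(k-1)/2 + k` of links. -/
def mm (k : ℕ) : ℕ := k * (k - 1) / 2 + k

/-- The nested set `N_i = {1, …, i}`. -/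
def Nset (i : ℕ) : Finset ℕ := Finset.Icc 1 i

/-- The Q-set `Q_j = {2+(j-1)k/2, …, 1+j·k/2}`. -/
def Qset (k j : ℕ) : Finset ℕ := Finset.Icc (2 + (j - 1) * (k / 2)) (1 + j * (k / 2))

/-- Capacity of the path edge `{i, i+1}` of the capacitated graph `G`. -/
def pathCap (k i : ℕ) : ℕ :=
  if i = 1 ∨ i = nn k - 1 then 2
  else if ∃ j ∈ Finset.Icc 1 (k - 1), i ∈ Qset k j ∧ i + 1 ∈ Qset k j then 3
  else 1

/-- Capacity of the cut `δ(S)` in the capacitated graph `G`: the sum of the capacities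
of the edges of `G` with exactly one endpoint in `S`. -/
def cutCap (k : ℕ) (S : Finset ℕ) : ℕ :=
  (∑ i ∈ Finset.Icc 1 (nn k - 1),
      if (i ∈ S) ↔ ((i + 1) ∈ S) then 0 else pathCap k i)
  + (∑ j ∈ Finset.Icc 1 (k - 1),
      if ((1 + (j - 1) * (k / 2)) ∈ S) ↔ ((2 + j * (k / 2)) ∈ S) then 0 else 1)

/-- A links system: the `s,t`-paths `P_1, …, P_{k-1}` are recorded by the function
`node`, where `node i t` is the `t`-th node of the path `P_i` (for `1 ≤ i ≤ k-1` and
`0 ≤ t ≤ k/2 + 1`); the class `P_k` consists of the single link `{1, n}`. -/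
structure LinksSystem (k : ℕ) where
  node : ℕ → ℕ → ℕ
  /-- each path `P_i` starts at `s = 1` -/
  node_first : ∀ i ∈ Finset.Icc 1 (k - 1), node i 0 = 1
  /-- each path `P_i` ends at `t = n` -/
  node_last : ∀ i ∈ Finset.Icc 1 (k - 1), node i (k / 2 + 1) = nn k
  /-- node indices strictly increase along each path -/
  node_mono : ∀ i ∈ Finset.Icc 1 (k - 1), ∀ t ≤ k / 2, node i t < node i (t + 1)
  /-- every node in `{2, …, n-1}` is an internal node of exactly one of `P_1, …, P_{k-1}` -/
  cover : ∀ v ∈ Finset.Icc 2 (nn k - 1),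
      ∃! i, i ∈ Finset.Icc 1 (k - 1) ∧ ∃ t ∈ Finset.Icc 1 (k / 2), node i t = v
  /-- `P_i` has an internal node in `Q_j` iff
  `(i ≤ j ≤ min(i+k/2-1, k-1))` or `(j < i and j ≤ i-k/2)` -/
  meetsQ : ∀ i ∈ Finset.Icc 1 (k - 1), ∀ j ∈ Finset.Icc 1 (k - 1),
      ((∃ t ∈ Finset.Icc 1 (k / 2), node i t ∈ Qset k j) ↔
        ((i ≤ j ∧ j ≤ min (i + k / 2 - 1) (k - 1)) ∨ (j < i ∧ j ≤ i - k / 2)))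

/-- The class `P_i` of links: the edge set of the path `P_i` for `i < k`,
and `{{1, n}}` for `i = k`. -/
def LinksSystem.P {k : ℕ} (LS : LinksSystem k) (i : ℕ) : Finset (Sym2 ℕ) :=
  if i = k then {s(1, nn k)}
  else (Finset.Icc 0 (k / 2)).image fun t => s(LS.node i t, LS.node i (t + 1))

/-- The set `L` of all links. -/
def LinksSystem.links {k : ℕ} (LS : LinksSystem k) : Finset (Sym2 ℕ) :=
  (Finset.Icc 1 k).biUnion LS.P

open scoped Classical in
/-- `deltaL F S` is `δ_F(S)`: the set of links of `F` with exactly one endpoint in `S`. -/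
noncomputable def deltaL (F : Finset (Sym2 ℕ)) (S : Finset ℕ) : Finset (Sym2 ℕ) :=
  F.filter fun e => ∃ a b, e = s(a, b) ∧ a ∈ S ∧ b ∉ S

/-- The 0-1 indicator vector `χ^F` of a set `F` of links. -/
noncomputable def chi (F : Finset (Sym2 ℕ)) : Sym2 ℕ → ℝ :=
  fun e => if e ∈ F then 1 else 0


section Proofs

open scoped Classical

variable {k : ℕ} (LS : LinksSystem k)

lemma half_mul (hke : Even k) : k * (k - 1) / 2 = (k - 1) * (k / 2) := by
  obtain ⟨h, rfl⟩ := hke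
  have h1 : (h + h) / 2 = h := by omega
  have h2 : (h + h) * (h + h - 1) = 2 * (h * (h + h - 1)) := by
    have : ∀ x : ℕ, (h + h) * x = 2 * (h * x) := fun x => by ring
    exact this _
  rw [h1, h2, Nat.mul_div_cancel_left _ (by norm_num), Nat.mul_comm]

lemma nn_eq (hke : Even k) : nn k = 2 + (k - 1) * (k / 2) := by
  unfold nn; rw [half_mul hke]

lemma node_lt {i : ℕ} (hi : i ∈ Finset.Icc 1 (k - 1)) {a b : ℕ} (hab : a < b)
    (hb : b ≤ k / 2 + 1) : LS.node i a < LS.node i b := by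
  induction b with
  | zero => omega
  | succ n ih =>
    rcases Nat.lt_succ_iff_lt_or_eq.mp hab with h' | h'
    · exact (ih h' (by omega)).trans (LS.node_mono i hi n (by omega))
    · subst h'; exact LS.node_mono i hi a (by omega)

lemma node_inj {i : ℕ} (hi : i ∈ Finset.Icc 1 (k - 1)) {a b : ℕ} (ha : a ≤ k / 2 + 1)
    (hb : b ≤ k / 2 + 1) (h : LS.node i a = LS.node i b) : a = b := by
  rcases lt_trichotomy a b with h' | h' | h'
  · exact absurd h (node_lt LS hi h' hb).ne
  · exact h'
  · exact absurd h.symm (node_lt LS hi h' ha).ne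

lemma node_internal {i t : ℕ} (hi : i ∈ Finset.Icc 1 (k - 1)) (ht : t ∈ Finset.Icc 1 (k / 2)) :
    LS.node i t ∈ Finset.Icc 2 (nn k - 1) := by
  simp only [mem_Icc] at ht ⊢
  have h1 : LS.node i 0 < LS.node i t := node_lt LS hi (by omega) (by omega)
  have h2 : LS.node i t < LS.node i (k / 2 + 1) := node_lt LS hi (by omega) (by omega)
  rw [LS.node_first i hi] at h1
  rw [LS.node_last i hi] at h2
  have : 2 ≤ nn k := by unfold nn; omega
  omega

lemma one_not_mem_Q {j : ℕ} : 1 ∉ Qset k j := by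
  simp only [Qset, mem_Icc]; omega

lemma nn_not_mem_Q (hke : Even k) {j : ℕ} (hj : j ∈ Finset.Icc 1 (k - 1)) :
    nn k ∉ Qset k j := by
  simp only [Qset, mem_Icc, mem_Icc] at hj ⊢
  rw [nn_eq hke]
  rintro ⟨-, h2⟩
  have := Nat.mul_le_mul_right (k / 2) hj.2
  omega

lemma mem_q_unique {v j j' : ℕ} (hj : 1 ≤ j) (hj' : 1 ≤ j')
    (h1 : v ∈ Qset k j) (h2 : v ∈ Qset k j') : j = j' := by
  simp only [Qset, mem_Icc] at h1 h2
  rcases lt_trichotomy j j' with h | h | h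
  · have hle : j ≤ j' - 1 := by omega
    have := Nat.mul_le_mul_right (k / 2) hle
    omega
  · exact h
  · have hle : j' ≤ j - 1 := by omega
    have := Nat.mul_le_mul_right (k / 2) hle
    omega

lemma mem_q_exists (hk : 4 ≤ k) (hke : Even k) {v : ℕ} (hv : v ∈ Finset.Icc 2 (nn k - 1)) :
    ∃ j ∈ Finset.Icc 1 (k - 1), v ∈ Qset k j := by
  simp only [mem_Icc] at hv
  rw [nn_eq hke] at hv
  have hpos : 0 < k / 2 := by omega
  obtain ⟨q, r, hqr, hr⟩ : ∃ q r, v - 2 = (k / 2) * q + r ∧ r < k / 2 :=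
    ⟨(v - 2) / (k / 2), (v - 2) % (k / 2), (Nat.div_add_mod _ _).symm, Nat.mod_lt _ hpos⟩
  refine ⟨q + 1, ?_, ?_⟩
  · simp only [mem_Icc]
    refine ⟨by omega, ?_⟩
    by_contra hcon
    push_neg at hcon
    have h1 : k - 1 ≤ q := by omega
    have h2 := Nat.mul_le_mul_left (k / 2) h1
    have h3 : (k - 1) * (k / 2) = (k / 2) * (k - 1) := Nat.mul_comm _ _
    omega
  · simp only [Qset, mem_Icc]
    have hc1 : (q + 1 - 1) * (k / 2) = (k / 2) * q := by
      simp [Nat.mul_comm]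
    have hc2 : (q + 1) * (k / 2) = (k / 2) * q + (k / 2) := by ring
    omega

lemma count_M (hk : 4 ≤ k) (hke : Even k) {i : ℕ} (hi : i ∈ Finset.Icc 1 (k - 1)) :
    ((Finset.Icc 1 (k - 1)).filter
      (fun j => (i ≤ j ∧ j ≤ min (i + k / 2 - 1) (k - 1)) ∨ (j < i ∧ j ≤ i - k / 2))).card
      = k / 2 := by
  obtain ⟨h, hk2⟩ := hke
  simp only [mem_Icc] at hi
  have heq : ((Finset.Icc 1 (k - 1)).filter
      (fun j => (i ≤ j ∧ j ≤ min (i + k / 2 - 1) (k - 1)) ∨ (j < i ∧ j ≤ i - k / 2)))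
      = Finset.Icc 1 (i - k / 2) ∪ Finset.Icc i (min (i + k / 2 - 1) (k - 1)) := by
    ext a
    simp only [mem_filter, mem_union, mem_Icc]
    omega
  rw [heq, card_union_of_disjoint, Nat.card_Icc, Nat.card_Icc]
  · omega
  · rw [disjoint_left]
    intro a ha hb
    simp only [mem_Icc] at ha hb
    omega

lemma count_N (hk : 4 ≤ k) (hke : Even k) {j : ℕ} (hj : j ∈ Finset.Icc 1 (k - 1)) :
    ((Finset.Icc 1 (k - 1)).filter
      (fun i => (i ≤ j ∧ j ≤ min (i + k / 2 - 1) (k - 1)) ∨ (j < i ∧ j ≤ i - k / 2))).card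
      = k / 2 := by
  obtain ⟨h, hk2⟩ := hke
  simp only [mem_Icc] at hj
  have heq : ((Finset.Icc 1 (k - 1)).filter
      (fun i => (i ≤ j ∧ j ≤ min (i + k / 2 - 1) (k - 1)) ∨ (j < i ∧ j ≤ i - k / 2)))
      = Finset.Icc (max 1 (j + 1 - k / 2)) j ∪ Finset.Icc (j + k / 2) (k - 1) := by
    ext a
    simp only [mem_filter, mem_union, mem_Icc]
    omega
  rw [heq, card_union_of_disjoint, Nat.card_Icc, Nat.card_Icc]
  · omega
  · rw [disjoint_left]
    intro a ha hb
    simp only [mem_Icc] at ha hb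
    omega

lemma crosses_iff {S : Finset ℕ} {x y : ℕ} :
    (∃ a b, s(x, y) = s(a, b) ∧ a ∈ S ∧ b ∉ S) ↔ ((x ∈ S ∧ y ∉ S) ∨ (y ∈ S ∧ x ∉ S)) := by
  constructor
  · rintro ⟨a, b, hab, ha, hb⟩
    rcases Sym2.eq_iff.mp hab with ⟨rfl, rfl⟩ | ⟨rfl, rfl⟩
    · exact Or.inl ⟨ha, hb⟩
    · exact Or.inr ⟨ha, hb⟩
  · rintro (⟨h1, h2⟩ | ⟨h1, h2⟩)
    · exact ⟨x, y, rfl, h1, h2⟩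
    · exact ⟨y, x, Sym2.eq_swap, h1, h2⟩

lemma deltaL_inter {S : Finset ℕ} {i : ℕ} (hi : i ∈ Finset.Icc 1 k) :
    deltaL LS.links S ∩ LS.P i
      = (LS.P i).filter (fun e => ∃ a b, e = s(a, b) ∧ a ∈ S ∧ b ∉ S) := by
  ext e
  simp only [deltaL, mem_inter, mem_filter, LinksSystem.links, mem_biUnion]
  constructor
  · rintro ⟨⟨-, hpred⟩, hP⟩
    exact ⟨hP, hpred⟩
  · rintro ⟨hP, hpred⟩
    exact ⟨⟨⟨i, hi, hP⟩, hpred⟩, hP⟩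

lemma unique_t (hk : 4 ≤ k) (hke : Even k) {i j : ℕ} (hi : i ∈ Finset.Icc 1 (k - 1))
    (hj : j ∈ Finset.Icc 1 (k - 1))
    (hmet : ∃ t ∈ Finset.Icc 1 (k / 2), LS.node i t ∈ Qset k j) :
    ∃ t0 ∈ Finset.Icc 1 (k / 2), LS.node i t0 ∈ Qset k j ∧
      ∀ t ∈ Finset.Icc 1 (k / 2), LS.node i t ∈ Qset k j → t = t0 := by
  have hj1 : 1 ≤ j := (mem_Icc.mp hj).1
  set M := (Finset.Icc 1 (k - 1)).filter
      (fun j' => (i ≤ j' ∧ j' ≤ min (i + k / 2 - 1) (k - 1)) ∨ (j' < i ∧ j' ≤ i - k / 2))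
      with hM
  have hMcard : M.card = k / 2 := count_M hk hke hi
  have hf : ∀ t ∈ Finset.Icc 1 (k / 2), ∃ j' ∈ Finset.Icc 1 (k - 1), LS.node i t ∈ Qset k j' :=
    fun t ht => mem_q_exists hk hke (node_internal LS hi ht)
  choose! f hf1 hf2 using hf
  have hfval : ∀ t ∈ Finset.Icc 1 (k / 2), ∀ j'', 1 ≤ j'' → LS.node i t ∈ Qset k j'' →
      f t = j'' := by
    intro t ht j'' hj'' hQ
    exact mem_q_unique (mem_Icc.mp (hf1 t ht)).1 hj'' (hf2 t ht) hQ
  have hsurj : ∀ j'' ∈ M, ∃ t ∈ Finset.Icc 1 (k / 2), f t = j'' := by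
    intro j'' hj''
    rw [hM, mem_filter] at hj''
    obtain ⟨t, ht, hQ⟩ := (LS.meetsQ i hi j'' hj''.1).mpr hj''.2
    exact ⟨t, ht, hfval t ht j'' (mem_Icc.mp hj''.1).1 hQ⟩
  obtain ⟨t0, ht0, hQ0⟩ := hmet
  refine ⟨t0, ht0, hQ0, ?_⟩
  intro t ht hQ
  by_contra hne
  have hft : f t = j := hfval t ht j hj1 hQ
  have hft0 : f t0 = j := hfval t0 ht0 j hj1 hQ0
  have hsurj2 : Set.SurjOn f ↑((Finset.Icc 1 (k / 2)).erase t0) ↑M := by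
    intro j'' hj''
    obtain ⟨t'', ht'', hft''⟩ := hsurj j'' (by exact_mod_cast hj'')
    by_cases hcase : t'' = t0
    · refine ⟨t, ?_, ?_⟩
      · simp only [coe_erase, Set.mem_diff, Finset.mem_coe, Set.mem_singleton_iff]
        exact ⟨ht, hne⟩
      · rw [hft, ← hft'', hcase, hft0]
    · refine ⟨t'', ?_, hft''⟩
      simp only [coe_erase, Set.mem_diff, Finset.mem_coe, Set.mem_singleton_iff]
      exact ⟨ht'', hcase⟩
  have hle := Finset.card_le_card_of_surjOn f hsurj2
  rw [Finset.card_erase_of_mem ht0, Nat.card_Icc] at hle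
  omega

lemma node_mem_Q_iff (hk : 4 ≤ k) (hke : Even k) {i j t0 : ℕ}
    (hi : i ∈ Finset.Icc 1 (k - 1)) (hj : j ∈ Finset.Icc 1 (k - 1))
    (ht0 : t0 ∈ Finset.Icc 1 (k / 2)) (hQ0 : LS.node i t0 ∈ Qset k j)
    (huniq : ∀ t ∈ Finset.Icc 1 (k / 2), LS.node i t ∈ Qset k j → t = t0) :
    ∀ t ≤ k / 2 + 1, (LS.node i t ∈ Qset k j ↔ t = t0) := by
  intro t htle
  constructor
  · intro hQ
    rcases Nat.eq_zero_or_pos t with rfl | ht1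
    · rw [LS.node_first i hi] at hQ
      exact absurd hQ one_not_mem_Q
    rcases Nat.lt_or_ge t (k / 2 + 1) with h2 | h2
    · exact huniq t (by rw [mem_Icc]; omega) hQ
    · have he : t = k / 2 + 1 := by omega
      rw [he, LS.node_last i hi] at hQ
      exact absurd hQ (nn_not_mem_Q hke hj)
  · rintro rfl; exact hQ0

lemma g_injOn {i : ℕ} (hi : i ∈ Finset.Icc 1 (k - 1)) :
    Set.InjOn (fun t => s(LS.node i t, LS.node i (t + 1))) ↑(Finset.Icc 0 (k / 2)) := by
  intro a ha b hb hab
  simp only [coe_Icc, Set.mem_Icc] at ha hb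
  simp only [Sym2.eq_iff] at hab
  rcases hab with ⟨h1, h2⟩ | ⟨h1, h2⟩
  · exact node_inj LS hi (by omega) (by omega) h1
  · have e1 := node_inj LS hi (by omega) (by omega) h1
    have e2 := node_inj LS hi (by omega) (by omega) h2
    omega

lemma card_two (hk : 4 ≤ k) (hke : Even k) {i j : ℕ} (hi : i ∈ Finset.Icc 1 (k - 1))
    (hj : j ∈ Finset.Icc 1 (k - 1))
    (hmet : ∃ t ∈ Finset.Icc 1 (k / 2), LS.node i t ∈ Qset k j) :
    ((LS.P i).filter (fun e => ∃ a b, e = s(a, b) ∧ a ∈ Qset k j ∧ b ∉ Qset k j)).card = 2 := by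
  obtain ⟨t0, ht0, hQ0, huniq⟩ := unique_t LS hk hke hi hj hmet
  have hmemQ := node_mem_Q_iff LS hk hke hi hj ht0 hQ0 huniq
  have ht0' := mem_Icc.mp ht0
  have hik : i ≠ k := by
    have := mem_Icc.mp hi; omega
  simp only [LinksSystem.P, if_neg hik]
  rw [filter_image, card_image_of_injOn
    ((g_injOn LS hi).mono (Finset.coe_subset.mpr (filter_subset _ _)))]
  have hset : (Finset.Icc 0 (k / 2)).filter
      (fun t => ∃ a b, s(LS.node i t, LS.node i (t + 1)) = s(a, b) ∧ a ∈ Qset k j ∧ b ∉ Qset k j)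
      = {t0 - 1, t0} := by
    ext t
    simp only [mem_filter, mem_Icc, mem_insert, mem_singleton]
    constructor
    · rintro ⟨⟨-, ht⟩, hcr⟩
      rw [crosses_iff, hmemQ t (by omega), hmemQ (t + 1) (by omega)] at hcr
      omega
    · intro hor
      have htr : t ≤ k / 2 := by omega
      refine ⟨⟨Nat.zero_le _, htr⟩, ?_⟩
      rw [crosses_iff, hmemQ t (by omega), hmemQ (t + 1) (by omega)]
      omega
  rw [hset]
  exact card_pair (by omega)

lemma card_zero (hk : 4 ≤ k) (hke : Even k) {i j : ℕ} (hi : i ∈ Finset.Icc 1 (k - 1))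
    (hj : j ∈ Finset.Icc 1 (k - 1))
    (hnot : ¬ ∃ t ∈ Finset.Icc 1 (k / 2), LS.node i t ∈ Qset k j) :
    ((LS.P i).filter (fun e => ∃ a b, e = s(a, b) ∧ a ∈ Qset k j ∧ b ∉ Qset k j)).card = 0 := by
  have hik : i ≠ k := by
    have := mem_Icc.mp hi; omega
  rw [Finset.card_eq_zero, Finset.filter_eq_empty_iff]
  intro e he
  simp only [LinksSystem.P, if_neg hik, mem_image, mem_Icc] at he
  obtain ⟨t, ht, rfl⟩ := he
  have hnone : ∀ u, u ≤ k / 2 + 1 → LS.node i u ∉ Qset k j := by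
    intro u hu hQ
    rcases Nat.eq_zero_or_pos u with rfl | hu1
    · rw [LS.node_first i hi] at hQ
      exact one_not_mem_Q hQ
    rcases Nat.lt_or_ge u (k / 2 + 1) with h2 | h2
    · exact hnot ⟨u, by rw [mem_Icc]; omega, hQ⟩
    · have he : u = k / 2 + 1 := by omega
      rw [he, LS.node_last i hi] at hQ
      exact nn_not_mem_Q hke hj hQ
  rw [crosses_iff]
  rintro (⟨h1, -⟩ | ⟨h1, -⟩)
  · exact hnone t (by omega) h1
  · exact hnone (t + 1) (by omega) h1

lemma Pk_filter (hk : 4 ≤ k) (hke : Even k) {j : ℕ} (hj : j ∈ Finset.Icc 1 (k - 1)) :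
    ((LS.P k).filter (fun e => ∃ a b, e = s(a, b) ∧ a ∈ Qset k j ∧ b ∉ Qset k j)) = ∅ := by
  have hPk : LS.P k = {s(1, nn k)} := by simp [LinksSystem.P]
  rw [hPk, Finset.filter_eq_empty_iff]
  intro e he
  rw [mem_singleton] at he
  subst he
  rw [crosses_iff]
  rintro (⟨h1, -⟩ | ⟨h1, -⟩)
  · exact one_not_mem_Q h1
  · exact nn_not_mem_Q hke hj h1

lemma not_mem_Pk_edge (hk : 4 ≤ k) (hke : Even k) {a : ℕ} (ha : a ∈ Finset.Icc 1 (k - 1)) :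
    s(1, nn k) ∉ LS.P a := by
  have hak : a ≠ k := by
    have := mem_Icc.mp ha; omega
  simp only [LinksSystem.P, if_neg hak, mem_image, mem_Icc]
  rintro ⟨u, hu, heq⟩
  have hnn : 2 ≤ nn k := by unfold nn; omega
  rcases Sym2.eq_iff.mp heq with ⟨h1, h2⟩ | ⟨h1, h2⟩
  · -- 1 = node a u, nn k = node a (u+1)
    have hu0 : u = 0 := by
      by_contra hu0
      have := node_lt LS ha (show 0 < u by omega) (by omega)
      rw [LS.node_first a ha] at this
      omega
    have hvv := node_internal LS ha (show u + 1 ∈ Finset.Icc 1 (k / 2) by rw [mem_Icc]; omega)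
    rw [mem_Icc] at hvv
    omega
  · -- 1 = node a (u+1), nn k = node a u
    have := LS.node_mono a ha u (by omega)
    omega

lemma edge_mem_unique (hk : 4 ≤ k) (hke : Even k) {a b : ℕ}
    (ha : a ∈ Finset.Icc 1 (k - 1)) (hb : b ∈ Finset.Icc 1 (k - 1))
    {e : Sym2 ℕ} (hea : e ∈ LS.P a) (heb : e ∈ LS.P b) : a = b := by
  have hak : a ≠ k := by have := mem_Icc.mp ha; omega
  have hbk : b ≠ k := by have := mem_Icc.mp hb; omega
  simp only [LinksSystem.P, if_neg hak, if_neg hbk, mem_image, mem_Icc] at hea heb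
  obtain ⟨u, hu, hequ⟩ := hea
  obtain ⟨w, hw, heqw⟩ := heb
  have heq2 : s(LS.node a u, LS.node a (u + 1)) = s(LS.node b w, LS.node b (w + 1)) :=
    hequ.trans heqw.symm
  have h12 : LS.node a u = LS.node b w ∧ LS.node a (u + 1) = LS.node b (w + 1) := by
    rcases Sym2.eq_iff.mp heq2 with h | ⟨h1, h2⟩
    · exact h
    · have m1 := LS.node_mono a ha u (by omega)
      have m2 := LS.node_mono b hb w (by omega)
      omega
  obtain ⟨h1, h2⟩ := h12
  have hnn : 2 ≤ nn k := by unfold nn; omega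
  by_cases hu0 : u = 0
  · have hv : LS.node a (u + 1) ∈ Finset.Icc 2 (nn k - 1) :=
      node_internal LS ha (by rw [mem_Icc]; omega)
    have hw1 : w + 1 ≤ k / 2 := by
      by_contra hcon
      have hwe : w + 1 = k / 2 + 1 := by omega
      rw [hwe, LS.node_last b hb] at h2
      rw [mem_Icc] at hv
      omega
    obtain ⟨c, -, hc⟩ := LS.cover (LS.node a (u + 1)) hv
    have hca : a = c := hc a ⟨ha, u + 1, by rw [mem_Icc]; omega, rfl⟩
    have hcb : b = c := hc b ⟨hb, w + 1, by rw [mem_Icc]; omega, h2.symm⟩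
    rw [hca, hcb]
  · have hu1 : 1 ≤ u := by omega
    have hv : LS.node a u ∈ Finset.Icc 2 (nn k - 1) :=
      node_internal LS ha (by rw [mem_Icc]; omega)
    have hw1 : 1 ≤ w := by
      by_contra hcon
      have hwe : w = 0 := by omega
      rw [hwe, LS.node_first b hb] at h1
      rw [mem_Icc] at hv
      omega
    obtain ⟨c, -, hc⟩ := LS.cover (LS.node a u) hv
    have hca : a = c := hc a ⟨ha, u, by rw [mem_Icc]; omega, rfl⟩
    have hcb : b = c := hc b ⟨hb, w, by rw [mem_Icc]; omega, h1.symm⟩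
    rw [hca, hcb]

lemma P_disj (hk : 4 ≤ k) (hke : Even k) :
    ∀ a ∈ Finset.Icc 1 k, ∀ b ∈ Finset.Icc 1 k, a ≠ b → Disjoint (LS.P a) (LS.P b) := by
  intro a ha b hb hab
  rw [disjoint_left]
  intro e hea heb
  have hPk : LS.P k = {s(1, nn k)} := by simp [LinksSystem.P]
  by_cases hak : a = k
  · rw [hak, hPk, mem_singleton] at hea
    subst hea
    refine not_mem_Pk_edge LS hk hke ?_ heb
    rw [mem_Icc] at hb ⊢
    omega
  · by_cases hbk : b = k
    · rw [hbk, hPk, mem_singleton] at heb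
      subst heb
      refine not_mem_Pk_edge LS hk hke ?_ hea
      rw [mem_Icc] at ha ⊢
      omega
    · have ha' : a ∈ Finset.Icc 1 (k - 1) := by rw [mem_Icc] at ha ⊢; omega
      have hb' : b ∈ Finset.Icc 1 (k - 1) := by rw [mem_Icc] at hb ⊢; omega
      exact hab (edge_mem_unique LS hk hke ha' hb' hea heb)

lemma count_N' (hk : 4 ≤ k) (hke : Even k) {j : ℕ} (hj : j ∈ Finset.Icc 1 (k - 1))
    (p : ℕ → Prop) [DecidablePred p]
    (hp : ∀ i ∈ Finset.Icc 1 (k - 1),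
      p i ↔ ((i ≤ j ∧ j ≤ min (i + k / 2 - 1) (k - 1)) ∨ (j < i ∧ j ≤ i - k / 2))) :
    ((Finset.Icc 1 (k - 1)).filter p).card = k / 2 := by
  have heq : (Finset.Icc 1 (k - 1)).filter p
      = (Finset.Icc 1 (k - 1)).filter
        (fun i => (i ≤ j ∧ j ≤ min (i + k / 2 - 1) (k - 1)) ∨ (j < i ∧ j ≤ i - k / 2)) := by
    ext a
    simp only [mem_filter]
    exact and_congr_right fun ha => hp a ha
  rw [heq]
  exact count_N hk hke hj

/-- for every links system `L` and every `j ∈ {1, …, k-1}`: `δ_L(Q_j)`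
contains no link of `P_k`; for each `i ∈ {1, …, k-1}`, `δ_L(Q_j)` contains exactly two
links of `P_i` if `P_i` has an internal node in `Q_j`, and no link of `P_i` otherwise;
consequently `|δ_L(Q_j)| = k`. -/
theorem statement5 (k : ℕ) (hk : 4 ≤ k) (hke : Even k) (LS : LinksSystem k) :
    ∀ j ∈ Finset.Icc 1 (k - 1),
      (deltaL LS.links (Qset k j) ∩ LS.P k = ∅) ∧
      (∀ i ∈ Finset.Icc 1 (k - 1),
        ((∃ t ∈ Finset.Icc 1 (k / 2), LS.node i t ∈ Qset k j) →
            (deltaL LS.links (Qset k j) ∩ LS.P i).card = 2) ∧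
        (¬ (∃ t ∈ Finset.Icc 1 (k / 2), LS.node i t ∈ Qset k j) →
            (deltaL LS.links (Qset k j) ∩ LS.P i).card = 0)) ∧
      (deltaL LS.links (Qset k j)).card = k := by
  intro j hj
  refine ⟨?_, ?_, ?_⟩
  · rw [deltaL_inter LS (by rw [mem_Icc]; omega)]
    exact Pk_filter LS hk hke hj
  · intro i hi
    have hik : i ∈ Finset.Icc 1 k := by rw [mem_Icc] at hi ⊢; omega
    constructor
    · intro hmet
      rw [deltaL_inter LS hik]
      exact card_two LS hk hke hi hj hmet
    · intro hnot
      rw [deltaL_inter LS hik]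
      exact card_zero LS hk hke hi hj hnot
  · have h1 : deltaL LS.links (Qset k j)
        = (Finset.Icc 1 k).biUnion (fun i => (LS.P i).filter
            (fun e => ∃ a b, e = s(a, b) ∧ a ∈ Qset k j ∧ b ∉ Qset k j)) := by
      simp only [deltaL, LinksSystem.links]
      rw [filter_biUnion]
    rw [h1, card_biUnion]
    swap
    · intro x hx y hy hxy
      exact Finset.disjoint_filter_filter (P_disj LS hk hke x hx y hy hxy)
    have hins : Finset.Icc 1 k = insert k (Finset.Icc 1 (k - 1)) := by
      ext a; simp only [mem_insert, mem_Icc]; omega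
    rw [hins, Finset.sum_insert (by rw [mem_Icc]; omega), Pk_filter LS hk hke hj]
    have hsum : ∀ i ∈ Finset.Icc 1 (k - 1),
        ((LS.P i).filter (fun e => ∃ a b, e = s(a, b) ∧ a ∈ Qset k j ∧ b ∉ Qset k j)).card
        = if (∃ t ∈ Finset.Icc 1 (k / 2), LS.node i t ∈ Qset k j) then 2 else 0 := by
      intro i hi
      by_cases hmet : ∃ t ∈ Finset.Icc 1 (k / 2), LS.node i t ∈ Qset k j
      · rw [if_pos hmet]; exact card_two LS hk hke hi hj hmet
      · rw [if_neg hmet]; exact card_zero LS hk hke hi hj hmet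
    rw [Finset.sum_congr rfl hsum]
    have hsf := Finset.sum_filter (s := Finset.Icc 1 (k - 1))
      (fun i => ∃ t ∈ Finset.Icc 1 (k / 2), LS.node i t ∈ Qset k j) (fun _ => (2 : ℕ))
    rw [← hsf, Finset.sum_const, smul_eq_mul]
    rw [@count_N' k hk hke j hj (fun i => ∃ t ∈ Finset.Icc 1 (k / 2), LS.node i t ∈ Qset k j)
      (fun _ => Classical.propDecidable _) (fun i hi => LS.meetsQ i hi j hj)]
    obtain ⟨h, hk2⟩ := hke
    simp only [card_empty]
    omega

end Proofs

end CoverSmallCuts
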